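/- For every integer n ≥ 1: (1) a_{1,2}(4n) = b_{1,2}(4n); (2) a_{2,1}(4n) = c_{1,1}(4n); (3) a_{2,2}(4n) = a_{1,2}(4n+1) = c_{1,2}(4n) = b_{2,2}(4n); (4) a_{1,1}(4n+1) = b_{1,1}(4n+1) = b_{2,1}(4n); (5) a_{2,1}(4n+1) = a_{1,1}(4n+2) = c_{1,1}(4n+1) = b_{2,1}(4n+1); (6) a_{2,2}(4n+1) = c_{1,2}(4n+1) = c_{2,2}(4n); (7) a_{1,2}(4n+2) = b_{1,2}(4n+2) = b_{2,2}(4n+1); (8) a_{2,1}(4n+2) = c_{1,1}(4n+2) = c_{2,1}(4n+1); (9) a_{2,2}(4n+2) = a_{1,2}(4n+3) = c_{1,2}(4n+2) = b_{2,2}(4n+2); (10) a_{1,1}(4n+3) = b_{1,1}(4n+3) = b_{2,1}(4n+2); (11) a_{2,1}(4n+3) = c_{1,1}(4n+3) = b_{2,1}(4n+3); (12) a_{2,2}(4n+3) = c_{1,2}(4n+3) = c_{2,2}(4n+2). -/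

import Mathlib

/-- The 16-letter alphabet 𝒜 = {A,…,P}. -/
inductive A16 : Type
  | A | B | C | D | E | F | G | H | I | J | K | L | M | N | O | P
  deriving DecidableEq

/-- The 2×2 block substitution μ on 𝒜 (rows top to bottom). -/
def mu : A16 → Fin 2 → Fin 2 → A16
  | .A => ![![.A, .F], ![.G, .C]]
  | .B => ![![.A, .F], ![.H, .D]]
  | .C => ![![.B, .E], ![.G, .C]]
  | .D => ![![.B, .E], ![.H, .D]]
  | .E => ![![.A, .N], ![.G, .K]]
  | .F => ![![.A, .N], ![.H, .L]]
  | .G => ![![.B, .M], ![.G, .K]]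
  | .H => ![![.B, .M], ![.H, .L]]
  | .I => ![![.I, .F], ![.O, .C]]
  | .J => ![![.I, .F], ![.P, .D]]
  | .K => ![![.J, .E], ![.O, .C]]
  | .L => ![![.J, .E], ![.P, .D]]
  | .M => ![![.I, .N], ![.O, .K]]
  | .N => ![![.I, .N], ![.P, .L]]
  | .O => ![![.J, .M], ![.O, .K]]
  | .P => ![![.J, .M], ![.P, .L]]

/-- Entry version of μ, indexed by arbitrary naturals (via mod 2). -/
def muE (x : A16) (r c : ℕ) : A16 :=
  mu x ⟨r % 2, by omega⟩ ⟨c % 2, by omega⟩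

/-- `superE n x` is the supertile μⁿ(x), a 2ⁿ×2ⁿ array over 𝒜,
given as a total function on ℕ × ℕ (only indices < 2ⁿ are relevant). -/
def superE : ℕ → A16 → ℕ → ℕ → A16
  | 0, x, _, _ => x
  | n + 1, x, r, c => muE (superE n x (r / 2) (c / 2)) r c

/-- The supertile T_k = μᵏ(N). -/
def Tfun (k : ℕ) : ℕ → ℕ → A16 := superE k .N

/-- An m×n pattern over the alphabet α. -/
abbrev Pat (α : Type) (m n : ℕ) := Fin m → Fin n → α

/-- The set of m×n patterns occurring in the size×size array X. -/
def patIn {α : Type} (X : ℕ → ℕ → α) (size m n : ℕ) : Set (Pat α m n) :=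
  { p | ∃ r c : ℕ, r + m ≤ size ∧ c + n ≤ size ∧
      ∀ (i : Fin m) (j : Fin n), p i j = X (r + i) (c + j) }

/-- P(T, m×n) = ⋃ₖ P(T_k, m×n). -/
def PT (m n : ℕ) : Set (Pat A16 m n) := ⋃ k : ℕ, patIn (Tfun k) (2 ^ k) m n

/-- μ applied to an m×n pattern, as a total 2m×2n array on ℕ × ℕ
(indices are reduced mod the valid range; in range this is exactly μ(p)). -/
def muPatE {m n : ℕ} (p : Pat A16 m n) (r c : ℕ) : A16 :=
  if hm : 0 < m then
    if hn : 0 < n then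
      muE (p ⟨r / 2 % m, Nat.mod_lt _ hm⟩ ⟨c / 2 % n, Nat.mod_lt _ hn⟩) r c
    else .A
  else .A

/-- μ² applied to an m×n pattern, as a total 4m×4n array on ℕ × ℕ. -/
def mu2PatE {m n : ℕ} (p : Pat A16 m n) (r c : ℕ) : A16 :=
  muE (muPatE p (r / 2) (c / 2)) r c

/-- P_{i,j}(T, m×n) = { μ(x)[i,j,m×n] : x ∈ P(T,m×n) } (1-based corner (i,j)). -/
def Pij (i j m n : ℕ) : Set (Pat A16 m n) :=
  { q | ∃ x ∈ PT m n, ∀ (a : Fin m) (b : Fin n),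
      q a b = muPatE x (i - 1 + a) (j - 1 + b) }

/-- Q_{i,j}(T, m×n) = { μ²(x)[i,j,m×n] : x ∈ P(T,m×n) } (1-based corner (i,j)). -/
def Qij (i j m n : ℕ) : Set (Pat A16 m n) :=
  { q | ∃ x ∈ PT m n, ∀ (a : Fin m) (b : Fin n),
      q a b = mu2PatE x (i - 1 + a) (j - 1 + b) }

/-- The 2×2 block substitution φ from 𝒜 to ℬ = {0,1,2,3}. -/
def phi : A16 → Fin 2 → Fin 2 → Fin 4
  | .A => ![![0, 1], ![0, 0]]
  | .B => ![![0, 1], ![1, 1]]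
  | .C => ![![1, 0], ![0, 0]]
  | .D => ![![1, 0], ![1, 1]]
  | .E => ![![0, 3], ![0, 2]]
  | .F => ![![0, 3], ![1, 3]]
  | .G => ![![1, 2], ![0, 2]]
  | .H => ![![1, 2], ![1, 3]]
  | .I => ![![2, 1], ![2, 0]]
  | .J => ![![2, 1], ![3, 1]]
  | .K => ![![3, 0], ![2, 0]]
  | .L => ![![3, 0], ![3, 1]]
  | .M => ![![2, 3], ![2, 2]]
  | .N => ![![2, 3], ![3, 3]]
  | .O => ![![3, 2], ![2, 2]]
  | .P => ![![3, 2], ![3, 3]]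

/-- Entry version of φ, indexed by arbitrary naturals (via mod 2). -/
def phiE (x : A16) (r c : ℕ) : Fin 4 :=
  phi x ⟨r % 2, by omega⟩ ⟨c % 2, by omega⟩

/-- φ applied to an m×n pattern over 𝒜, as a total 2m×2n array on ℕ × ℕ. -/
def phiPatE {m n : ℕ} (p : Pat A16 m n) (r c : ℕ) : Fin 4 :=
  if hm : 0 < m then
    if hn : 0 < n then
      phiE (p ⟨r / 2 % m, Nat.mod_lt _ hm⟩ ⟨c / 2 % n, Nat.mod_lt _ hn⟩) r c
    else 0
  else 0

/-- φ(T_k), a 2^(k+1)×2^(k+1) array over ℬ. -/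
def Sfun (k : ℕ) (r c : ℕ) : Fin 4 := phiE (Tfun k (r / 2) (c / 2)) r c

/-- P(S, m×n) = ⋃_{k≥1} P(φ(T_{k-1}), m×n). -/
def PS (m n : ℕ) : Set (Pat (Fin 4) m n) :=
  ⋃ k : ℕ, patIn (Sfun k) (2 ^ (k + 1)) m n

/-- P_{i,j}(S, m×n) = { φ(x)[i,j,m×n] : x ∈ P(T,m×n) } (1-based corner (i,j)). -/
def PSij (i j m n : ℕ) : Set (Pat (Fin 4) m n) :=
  { q | ∃ x ∈ PT m n, ∀ (a : Fin m) (b : Fin n),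
      q a b = phiPatE x (i - 1 + a) (j - 1 + b) }

/-- A_n = |P(S, n×n)|. -/
noncomputable def Acnt (n : ℕ) : ℕ := Nat.card (PS n n)

/-- a_{i,j}(n) = |P_{i,j}(T, n×n)|. -/
noncomputable def aT (i j n : ℕ) : ℕ := Nat.card (Pij i j n n)

/-- b_{i,j}(n) = |P_{i,j}(T, n×(n+1))|. -/
noncomputable def bT (i j n : ℕ) : ℕ := Nat.card (Pij i j n (n + 1))

/-- c_{i,j}(n) = |P_{i,j}(T, (n+1)×n)|. -/
noncomputable def cT (i j n : ℕ) : ℕ := Nat.card (Pij i j (n + 1) n)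

-- ===== auxiliary development =====
def allA : List A16 := [.A,.B,.C,.D,.E,.F,.G,.H,.I,.J,.K,.L,.M,.N,.O,.P]

lemma allA_mem : ∀ v : A16, v ∈ allA := by intro v; cases v <;> decide

def S12b : A16 → A16 → Bool
  | .A, .F => true | .A, .N => true | .B, .E => true | .B, .M => true
  | .C, .G => true | .C, .H => true | .C, .O => true | .C, .P => true
  | .D, .G => true | .D, .H => true | .D, .O => true | .D, .P => true
  | .E, .B => true | .E, .J => true | .F, .A => true | .F, .I => true
  | .G, .C => true | .G, .K => true | .H, .D => true | .H, .L => true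
  | .I, .F => true | .I, .N => true | .J, .E => true | .J, .M => true
  | .K, .G => true | .K, .H => true | .K, .O => true | .K, .P => true
  | .L, .G => true | .L, .H => true | .L, .O => true | .L, .P => true
  | .M, .B => true | .M, .J => true | .N, .A => true | .N, .I => true
  | .O, .C => true | .O, .K => true | .P, .D => true | .P, .L => true
  | _, _ => false

def S21b : A16 → A16 → Bool
  | .A, .G => true | .A, .H => true | .B, .G => true | .B, .H => true
  | .C, .M => true | .C, .N => true | .D, .M => true | .D, .N => true
  | .E, .C => true | .E, .D => true | .F, .C => true | .F, .D => true
  | .G, .A => true | .G, .B => true | .G, .I => true | .H, .A => true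
  | .H, .B => true | .H, .I => true | .I, .O => true | .I, .P => true
  | .J, .O => true | .J, .P => true | .K, .E => true | .K, .F => true
  | .L, .E => true | .L, .F => true | .M, .K => true | .M, .L => true
  | .N, .K => true | .N, .L => true | .O, .A => true | .O, .I => true
  | .O, .J => true | .P, .A => true | .P, .I => true | .P, .J => true
  | _, _ => false

lemma ruleME : ∀ v v' : A16, mu v 0 0 = mu v' 0 0 → mu v 0 1 = mu v' 0 1 →
    mu v 1 0 = mu v' 1 0 → mu v 1 1 = mu v' 1 1 → v = v' := by
  have H : ∀ v ∈ allA, ∀ v' ∈ allA, mu v 0 0 = mu v' 0 0 → mu v 0 1 = mu v' 0 1 →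
      mu v 1 0 = mu v' 1 0 → mu v 1 1 = mu v' 1 1 → v = v' := by decide
  exact fun v v' => H v (allA_mem v) v' (allA_mem v')

lemma ruleL : ∀ u v v' : A16, S12b u v = true → S12b u v' = true →
    mu v 1 0 = mu v' 1 0 → v = v' := by
  have H : ∀ u ∈ allA, ∀ v ∈ allA, ∀ v' ∈ allA, S12b u v = true → S12b u v' = true →
      mu v 1 0 = mu v' 1 0 → v = v' := by decide
  exact fun u v v' => H u (allA_mem u) v (allA_mem v) v' (allA_mem v')

lemma ruleU : ∀ z v v' : A16, S21b v z = true → S21b v' z = true →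
    mu v 1 0 = mu v' 1 0 → v = v' := by
  have H : ∀ z ∈ allA, ∀ v ∈ allA, ∀ v' ∈ allA, S21b v z = true → S21b v' z = true →
      mu v 1 0 = mu v' 1 0 → v = v' := by decide
  exact fun z v v' => H z (allA_mem z) v (allA_mem v) v' (allA_mem v')

lemma ruleD : ∀ z v v' : A16, S21b z v = true → S21b z v' = true →
    mu v 0 0 = mu v' 0 0 → mu v 0 1 = mu v' 0 1 := by
  have H : ∀ z ∈ allA, ∀ v ∈ allA, ∀ v' ∈ allA, S21b z v = true → S21b z v' = true →
      mu v 0 0 = mu v' 0 0 → mu v 0 1 = mu v' 0 1 := by decide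
  exact fun z v v' => H z (allA_mem z) v (allA_mem v) v' (allA_mem v')

lemma ruleB : ∀ u v v' : A16, S12b v u = true → S12b v' u = true →
    mu v 1 1 = mu v' 1 1 → mu v 0 1 = mu v' 0 1 := by
  have H : ∀ u ∈ allA, ∀ v ∈ allA, ∀ v' ∈ allA, S12b v u = true → S12b v' u = true →
      mu v 1 1 = mu v' 1 1 → mu v 0 1 = mu v' 0 1 := by decide
  exact fun u v v' => H u (allA_mem u) v (allA_mem v) v' (allA_mem v')

lemma closH0 : ∀ (x : A16) (i : Fin 2), S12b (mu x i 0) (mu x i 1) = true := by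
  have H : ∀ x ∈ allA, ∀ i : Fin 2, S12b (mu x i 0) (mu x i 1) = true := by decide
  exact fun x => H x (allA_mem x)

lemma closH1 : ∀ (x y : A16) (i : Fin 2), S12b x y = true →
    S12b (mu x i 1) (mu y i 0) = true := by
  have H : ∀ x ∈ allA, ∀ y ∈ allA, ∀ i : Fin 2, S12b x y = true →
      S12b (mu x i 1) (mu y i 0) = true := by decide
  exact fun x y => H x (allA_mem x) y (allA_mem y)

lemma closV0 : ∀ (x : A16) (j : Fin 2), S21b (mu x 0 j) (mu x 1 j) = true := by
  have H : ∀ x ∈ allA, ∀ j : Fin 2, S21b (mu x 0 j) (mu x 1 j) = true := by decide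
  exact fun x => H x (allA_mem x)

lemma closV1 : ∀ (x y : A16) (j : Fin 2), S21b x y = true →
    S21b (mu x 1 j) (mu y 0 j) = true := by
  have H : ∀ x ∈ allA, ∀ y ∈ allA, ∀ j : Fin 2, S21b x y = true →
      S21b (mu x 1 j) (mu y 0 j) = true := by decide
  exact fun x y => H x (allA_mem x) y (allA_mem y)

-- ===== basic helpers =====
lemma muE_eq (x : A16) (r c : ℕ) (i j : Fin 2) (hi : r % 2 = i.val) (hj : c % 2 = j.val) :
    muE x r c = mu x i j := by
  unfold muE
  exact congrArg₂ (mu x) (Fin.ext hi) (Fin.ext hj)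

lemma muE_congr (x : A16) {r c r' c' : ℕ} (hr : r % 2 = r' % 2) (hc : c % 2 = c' % 2) :
    muE x r c = muE x r' c' :=
  (muE_eq x r c ⟨r' % 2, by omega⟩ ⟨c' % 2, by omega⟩ hr hc).trans
    (muE_eq x r' c' ⟨r' % 2, by omega⟩ ⟨c' % 2, by omega⟩ rfl rfl).symm

def WW (Y : ℕ → ℕ → A16) (r c : ℕ) : A16 := muE (Y (r / 2) (c / 2)) r c

lemma WW00 (Y : ℕ → ℕ → A16) (s t : ℕ) : WW Y (2*s) (2*t) = mu (Y s t) 0 0 := by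
  unfold WW
  rw [show 2*s/2 = s by omega, show 2*t/2 = t by omega]
  exact muE_eq _ _ _ _ _ (by omega) (by omega)

lemma WW01 (Y : ℕ → ℕ → A16) (s t : ℕ) : WW Y (2*s) (2*t+1) = mu (Y s t) 0 1 := by
  unfold WW
  rw [show 2*s/2 = s by omega, show (2*t+1)/2 = t by omega]
  exact muE_eq _ _ _ _ _ (by omega) (by omega)

lemma WW10 (Y : ℕ → ℕ → A16) (s t : ℕ) : WW Y (2*s+1) (2*t) = mu (Y s t) 1 0 := by
  unfold WW
  rw [show (2*s+1)/2 = s by omega, show 2*t/2 = t by omega]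
  exact muE_eq _ _ _ _ _ (by omega) (by omega)

lemma WW11 (Y : ℕ → ℕ → A16) (s t : ℕ) : WW Y (2*s+1) (2*t+1) = mu (Y s t) 1 1 := by
  unfold WW
  rw [show (2*s+1)/2 = s by omega, show (2*t+1)/2 = t by omega]
  exact muE_eq _ _ _ _ _ (by omega) (by omega)

-- ===== supertile splitting =====
lemma supSplit (j k : ℕ) (x : A16) : ∀ r c : ℕ,
    superE (j + k) x r c = superE k (superE j x (r / 2^k) (c / 2^k)) (r % 2^k) (c % 2^k) := by
  induction k with
  | zero => intro r c; simp [superE]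
  | succ k ih =>
    intro r c
    have e1 : r / 2 / 2^k = r / 2^(k+1) := by
      rw [Nat.div_div_eq_div_mul, pow_succ, mul_comm]
    have e2 : c / 2 / 2^k = c / 2^(k+1) := by
      rw [Nat.div_div_eq_div_mul, pow_succ, mul_comm]
    have e3 : r % 2^(k+1) / 2 = r / 2 % 2^k := by
      rw [pow_succ, mul_comm]
      exact Nat.mod_mul_right_div_self r 2 (2^k)
    have e4 : c % 2^(k+1) / 2 = c / 2 % 2^k := by
      rw [pow_succ, mul_comm]
      exact Nat.mod_mul_right_div_self c 2 (2^k)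
    have hdvd : (2:ℕ) ∣ 2^(k+1) := dvd_pow_self 2 (Nat.succ_ne_zero k)
    calc superE (j + (k+1)) x r c
        = superE ((j+k)+1) x r c := by rw [Nat.add_succ]
      _ = muE (superE (j+k) x (r/2) (c/2)) r c := rfl
      _ = muE (superE k (superE j x (r/2/2^k) (c/2/2^k)) (r/2 % 2^k) (c/2 % 2^k)) r c := by
            rw [ih (r/2) (c/2)]
      _ = muE (superE k (superE j x (r/2^(k+1)) (c/2^(k+1))) (r % 2^(k+1) / 2) (c % 2^(k+1) / 2))
            (r % 2^(k+1)) (c % 2^(k+1)) := by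
            rw [e1, e2, e3, e4]
            exact muE_congr _ (Nat.mod_mod_of_dvd r hdvd).symm (Nat.mod_mod_of_dvd c hdvd).symm
      _ = superE (k+1) (superE j x (r/2^(k+1)) (c/2^(k+1))) (r % 2^(k+1)) (c % 2^(k+1)) := rfl

lemma Tfun_shift (k r c : ℕ) (hr : r < 2^k) (hc : c < 2^k) :
    Tfun (k+3) r (c + 3*2^k) = Tfun k r c := by
  have hp : (0:ℕ) < 2^k := Nat.pow_pos (by norm_num)
  have h1 : (c + 3*2^k) / 2^k = 3 := by
    rw [Nat.add_mul_div_right c 3 hp, Nat.div_eq_of_lt hc]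
  have h2 : (c + 3*2^k) % 2^k = c := by
    rw [Nat.add_mul_mod_self_right, Nat.mod_eq_of_lt hc]
  have h3 : superE 3 A16.N 0 3 = A16.N := by decide
  unfold Tfun
  rw [show k + 3 = 3 + k by omega, supSplit 3 k, h1, h2,
    Nat.div_eq_of_lt hr, Nat.mod_eq_of_lt hr, h3]

-- ===== occurrences =====
def Occ (m n : ℕ) (p : Pat A16 m n) (k r c : ℕ) : Prop :=
  r + m ≤ 2^k ∧ c + n ≤ 2^k ∧ ∀ (i : Fin m) (j : Fin n), p i j = Tfun k (r+i.val) (c+j.val)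

lemma mem_PT {m n : ℕ} {p : Pat A16 m n} : p ∈ PT m n ↔ ∃ k r c, Occ m n p k r c := by
  simp only [PT, patIn, Set.mem_iUnion, Set.mem_setOf_eq, Occ]

lemma Occ.shift {m n : ℕ} {p : Pat A16 m n} {k r c : ℕ} (h : Occ m n p k r c) :
    Occ m n p (k+3) r (c + 3*2^k) := by
  obtain ⟨h1, h2, h3⟩ := h
  have hpow : 2^(k+3) = 8 * 2^k := by ring
  refine ⟨by omega, by omega, ?_⟩
  intro i j
  have hi := i.isLt
  have hj := j.isLt
  rw [h3 i j, show c + 3*2^k + j.val = c + j.val + 3*2^k by ring,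
    Tfun_shift k (r+i.val) (c+j.val) (by omega) (by omega)]

lemma Occ.iter {m n : ℕ} {p : Pat A16 m n} {k r c : ℕ} (h : Occ m n p k r c) :
    ∀ j, ∃ C, Occ m n p (k+3*j+3) r C ∧ C + n ≤ 2^(k+3*j+2) := by
  intro j
  induction j with
  | zero =>
    refine ⟨c + 3*2^k, by simpa using h.shift, ?_⟩
    have e : 2^(k+2) = 4 * 2^k := by ring
    have := h.2.1
    simp only [Nat.mul_zero, Nat.add_zero] at *
    omega
  | succ j ih =>
    obtain ⟨C, hC, hb⟩ := ih
    refine ⟨C + 3*2^(k+3*j+3), ?_, ?_⟩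
    · have := hC.shift
      have e : k+3*j+3+3 = k+3*(j+1)+3 := by ring
      rwa [e] at this
    · have e1 : 2^(k+3*(j+1)+2) = 8 * 2^(k+3*j+2) := by ring
      have e2 : 2^(k+3*j+3) = 2 * 2^(k+3*j+2) := by ring
      omega

lemma Occ.big {m n : ℕ} {p : Pat A16 m n} {k r c : ℕ} (h : Occ m n p k r c) (s : ℕ) :
    ∃ K C, Occ m n p K r C ∧ r + m + s ≤ 2^K ∧ C + n + s ≤ 2^K := by
  obtain ⟨C, hC, hb⟩ := h.iter s
  refine ⟨k+3*s+3, C, hC, ?_, ?_⟩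
  · have h1 : s < 2^s := Nat.lt_two_pow_self
    have h2 : (2:ℕ)^s ≤ 2^(k+3*s+2) := Nat.pow_le_pow_right (by norm_num) (by omega)
    have h3 : (2:ℕ)^k ≤ 2^(k+3*s+2) := Nat.pow_le_pow_right (by norm_num) (by omega)
    have h4 : 2^(k+3*s+3) = 2 * 2^(k+3*s+2) := by ring
    have := h.1
    omega
  · have h1 : s < 2^s := Nat.lt_two_pow_self
    have h2 : (2:ℕ)^s ≤ 2^(k+3*s+2) := Nat.pow_le_pow_right (by norm_num) (by omega)
    have h4 : 2^(k+3*s+3) = 2 * 2^(k+3*s+2) := by ring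
    omega

lemma PT_restrict {m n h w : ℕ} (hh : h ≤ m) (hw : w ≤ n) {p : Pat A16 m n} (hp : p ∈ PT m n) :
    (fun (s : Fin h) (t : Fin w) =>
      p ⟨s.1, lt_of_lt_of_le s.2 hh⟩ ⟨t.1, lt_of_lt_of_le t.2 hw⟩) ∈ PT h w := by
  rw [mem_PT] at *
  obtain ⟨k, r, c, h1, h2, h3⟩ := hp
  exact ⟨k, r, c, by omega, by omega, fun i j => h3 _ _⟩

lemma PT_extend {h w m n : ℕ} (hh : h ≤ m) (hw : w ≤ n) {y : Pat A16 h w} (hy : y ∈ PT h w) :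
    ∃ x ∈ PT m n, ∀ (s : Fin h) (t : Fin w),
      y s t = x ⟨s.1, lt_of_lt_of_le s.2 hh⟩ ⟨t.1, lt_of_lt_of_le t.2 hw⟩ := by
  rw [mem_PT] at hy
  obtain ⟨k, r, c, hocc⟩ := hy
  obtain ⟨K, C, hO, hr, hc⟩ := hocc.big (m + n)
  refine ⟨fun (i : Fin m) (j : Fin n) => Tfun K (r + i.1) (C + j.1), ?_, ?_⟩
  · rw [mem_PT]
    exact ⟨K, r, C, by omega, by omega, fun i j => rfl⟩
  · intro s t
    exact hO.2.2 s t

-- ===== language lemmas on T =====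
lemma langTH : ∀ k r c : ℕ, r < 2^k → c + 1 < 2^k →
    S12b (Tfun k r c) (Tfun k r (c+1)) = true := by
  intro k
  induction k with
  | zero => intro r c _ hc; simp at hc
  | succ k ih =>
    intro r c hr hc
    have hpow : 2^(k+1) = 2 * 2^k := by ring
    have eT : ∀ R C, Tfun (k+1) R C = muE (Tfun k (R/2) (C/2)) R C := fun _ _ => rfl
    rcases Nat.even_or_odd c with hce | hco
    · obtain ⟨t, ht⟩ := hce
      have e1 : c / 2 = t := by omega
      have e2 : (c+1) / 2 = t := by omega
      rw [eT, eT, e1, e2,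
        muE_eq _ r c ⟨r % 2, by omega⟩ 0 rfl (by simp; omega),
        muE_eq _ r (c+1) ⟨r % 2, by omega⟩ 1 rfl (by simp; omega)]
      exact closH0 _ _
    · obtain ⟨t, ht⟩ := hco
      have e1 : c / 2 = t := by omega
      have e2 : (c+1) / 2 = t + 1 := by omega
      rw [eT, eT, e1, e2,
        muE_eq _ r c ⟨r % 2, by omega⟩ 1 rfl (by simp; omega),
        muE_eq _ r (c+1) ⟨r % 2, by omega⟩ 0 rfl (by simp; omega)]
      exact closH1 _ _ _ (ih (r/2) t (by omega) (by omega))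

lemma langTV : ∀ k r c : ℕ, r + 1 < 2^k → c < 2^k →
    S21b (Tfun k r c) (Tfun k (r+1) c) = true := by
  intro k
  induction k with
  | zero => intro r c hr _; simp at hr
  | succ k ih =>
    intro r c hr hc
    have hpow : 2^(k+1) = 2 * 2^k := by ring
    have eT : ∀ R C, Tfun (k+1) R C = muE (Tfun k (R/2) (C/2)) R C := fun _ _ => rfl
    rcases Nat.even_or_odd r with hre | hro
    · obtain ⟨s, hs⟩ := hre
      have e1 : r / 2 = s := by omega
      have e2 : (r+1) / 2 = s := by omega
      rw [eT, eT, e1, e2,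
        muE_eq _ r c 0 ⟨c % 2, by omega⟩ (by simp; omega) rfl,
        muE_eq _ (r+1) c 1 ⟨c % 2, by omega⟩ (by simp; omega) rfl]
      exact closV0 _ _
    · obtain ⟨s, hs⟩ := hro
      have e1 : r / 2 = s := by omega
      have e2 : (r+1) / 2 = s + 1 := by omega
      rw [eT, eT, e1, e2,
        muE_eq _ r c 1 ⟨c % 2, by omega⟩ (by simp; omega) rfl,
        muE_eq _ (r+1) c 0 ⟨c % 2, by omega⟩ (by simp; omega) rfl]
      exact closV1 _ _ _ (ih s (c/2) (by omega) (by omega))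

-- ===== total lift and languages =====
def yF {h w : ℕ} (y : Pat A16 h w) (s t : ℕ) : A16 :=
  if hs : s < h then if ht : t < w then y ⟨s, hs⟩ ⟨t, ht⟩ else .A else .A

lemma yF_eq {h w : ℕ} (y : Pat A16 h w) {s t : ℕ} (hs : s < h) (ht : t < w) :
    yF y s t = y ⟨s, hs⟩ ⟨t, ht⟩ := by simp [yF, hs, ht]

lemma lang12 {h w : ℕ} {y : Pat A16 h w} (hy : y ∈ PT h w) {s t : ℕ}
    (hs : s < h) (ht : t + 1 < w) : S12b (yF y s t) (yF y s (t+1)) = true := by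
  obtain ⟨k, r, c, h1, h2, h3⟩ := mem_PT.1 hy
  rw [yF_eq y hs (by omega), yF_eq y hs ht, h3 ⟨s, hs⟩ ⟨t, by omega⟩, h3 ⟨s, hs⟩ ⟨t+1, ht⟩]
  have := langTH k (r+s) (c+t) (by omega) (by omega)
  rwa [show c + t + 1 = c + (t+1) by omega] at this

lemma lang21 {h w : ℕ} {y : Pat A16 h w} (hy : y ∈ PT h w) {s t : ℕ}
    (hs : s + 1 < h) (ht : t < w) : S21b (yF y s t) (yF y (s+1) t) = true := by
  obtain ⟨k, r, c, h1, h2, h3⟩ := mem_PT.1 hy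
  rw [yF_eq y (by omega) ht, yF_eq y hs ht, h3 ⟨s, by omega⟩ ⟨t, ht⟩, h3 ⟨s+1, hs⟩ ⟨t, ht⟩]
  have := langTV k (r+s) (c+t) (by omega) (by omega)
  rwa [show r + s + 1 = r + (s+1) by omega] at this

-- ===== image description of Pij =====
def Fmap (di dj m n : ℕ) {h w : ℕ} (y : Pat A16 h w) : Pat A16 m n :=
  fun a b => WW (yF y) (di + a.1) (dj + b.1)

lemma Pij_eq_image (di dj m n : ℕ) (hdi : di ≤ 1) (hdj : dj ≤ 1) (hm : 2 ≤ m) (hn : 2 ≤ n) :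
    Pij (di+1) (dj+1) m n
      = Fmap di dj m n (h := (m+di+1)/2) (w := (n+dj+1)/2) '' PT ((m+di+1)/2) ((n+dj+1)/2) := by
  set h := (m+di+1)/2 with hh
  set w := (n+dj+1)/2 with hw
  have hhm : h ≤ m := by omega
  have hwn : w ≤ n := by omega
  have hm0 : 0 < m := by omega
  have hn0 : 0 < n := by omega
  ext q
  constructor
  · rintro ⟨x, hx, hq⟩
    refine ⟨fun (s : Fin h) (t : Fin w) =>
      x ⟨s.1, lt_of_lt_of_le s.2 hhm⟩ ⟨t.1, lt_of_lt_of_le t.2 hwn⟩, PT_restrict hhm hwn hx, ?_⟩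
    funext a b
    have hs : (di + a.1) / 2 < h := by have := a.2; omega
    have ht : (dj + b.1) / 2 < w := by have := b.2; omega
    have e := hq a b
    rw [show di + 1 - 1 = di by omega, show dj + 1 - 1 = dj by omega] at e
    rw [Fmap, WW, yF_eq _ hs ht, e, muPatE, dif_pos hm0, dif_pos hn0]
    congr 1
    exact congrArg₂ x (Fin.ext (Nat.mod_eq_of_lt (by omega)).symm)
      (Fin.ext (Nat.mod_eq_of_lt (by omega)).symm)
  · rintro ⟨y, hy, rfl⟩
    obtain ⟨x, hx, hagree⟩ := PT_extend hhm hwn hy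
    refine ⟨x, hx, ?_⟩
    intro a b
    have hs : (di + a.1) / 2 < h := by have := a.2; omega
    have ht : (dj + b.1) / 2 < w := by have := b.2; omega
    rw [show di + 1 - 1 = di by omega, show dj + 1 - 1 = dj by omega]
    rw [Fmap, WW, yF_eq _ hs ht, hagree ⟨_, hs⟩ ⟨_, ht⟩, muPatE, dif_pos hm0, dif_pos hn0]
    congr 1
    exact congrArg₂ x (Fin.ext (Nat.mod_eq_of_lt (by omega)).symm)
      (Fin.ext (Nat.mod_eq_of_lt (by omega)).symm)

-- ===== cardinality of images with equal fibers =====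
lemma card_img {α β γ : Type*} (f : α → β) (g : α → γ) (s : Set α)
    (H : ∀ x ∈ s, ∀ y ∈ s, f x = f y ↔ g x = g y) :
    Nat.card (f '' s) = Nat.card (g '' s) := by
  have hmem : ∀ b : β, b ∈ f '' s → ∃ x, x ∈ s ∧ f x = b := fun b hb => hb
  choose pick hpick1 hpick2 using hmem
  have hmem' : ∀ cc : γ, cc ∈ g '' s → ∃ x, x ∈ s ∧ g x = cc := fun cc hcc => hcc
  choose pick' hp1 hp2 using hmem'
  refine Nat.card_eq_of_bijective
    (fun b => ⟨g (pick b.1 b.2), ⟨pick b.1 b.2, hpick1 _ _, rfl⟩⟩) ⟨?_, ?_⟩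
  · intro b b' he
    have h1 : g (pick b.1 b.2) = g (pick b'.1 b'.2) := congrArg Subtype.val he
    have h2 := (H _ (hpick1 _ b.2) _ (hpick1 _ b'.2)).mpr h1
    exact Subtype.ext ((hpick2 _ b.2).symm.trans (h2.trans (hpick2 _ b'.2)))
  · intro cc
    have hmemb : f (pick' cc.1 cc.2) ∈ f '' s := ⟨pick' cc.1 cc.2, hp1 _ _, rfl⟩
    refine ⟨⟨f (pick' cc.1 cc.2), hmemb⟩, ?_⟩
    apply Subtype.ext
    show g (pick (f (pick' cc.1 cc.2)) hmemb) = cc.1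
    exact ((H _ (hpick1 _ hmemb) _ (hp1 cc.1 cc.2)).mp (hpick2 _ hmemb)).trans (hp2 _ _)

-- ===== master lemmas =====
section Masters

variable {h w : ℕ} {Y Y' : ℕ → ℕ → A16}

/-- Master lemma: extra right column. -/
lemma masterR (R0 R1 C0 : ℕ)
    (hh : 2 ≤ h) (hw : 3 ≤ w) (hR0 : R0 ≤ 1) (hC0 : C0 ≤ 1)
    (hR1a : 2*h-2 ≤ R1) (hR1b : R1 ≤ 2*h-1)
    (hhp : R0 = 1 → 3 ≤ h) (hhq : R1 = 2*h-2 → 3 ≤ h)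
    (HL12 : ∀ s t, s < h → t + 1 < w → S12b (Y s t) (Y s (t+1)) = true)
    (HL12' : ∀ s t, s < h → t + 1 < w → S12b (Y' s t) (Y' s (t+1)) = true)
    (HL21 : ∀ s t, s + 1 < h → t < w → S21b (Y s t) (Y (s+1) t) = true)
    (HL21' : ∀ s t, s + 1 < h → t < w → S21b (Y' s t) (Y' (s+1) t) = true)
    (HS : ∀ r c, R0 ≤ r → r ≤ R1 → C0 ≤ c → c ≤ 2*w-2 → WW Y r c = WW Y' r c) :
    ∀ r c, R0 ≤ r → r ≤ R1 → C0 ≤ c → c ≤ 2*w-1 → WW Y r c = WW Y' r c := by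
  have A : ∀ s t, R0 ≤ 2*s → 2*s+1 ≤ R1 → C0 ≤ 2*t → 2*t+1 ≤ 2*w-2 → Y s t = Y' s t := by
    intro s t h1 h2 h3 h4
    apply ruleME
    · have := HS (2*s) (2*t) h1 (by omega) h3 (by omega); rwa [WW00, WW00] at this
    · have := HS (2*s) (2*t+1) h1 (by omega) (by omega) (by omega); rwa [WW01, WW01] at this
    · have := HS (2*s+1) (2*t) (by omega) h2 h3 (by omega); rwa [WW10, WW10] at this
    · have := HS (2*s+1) (2*t+1) (by omega) h2 (by omega) (by omega); rwa [WW11, WW11] at this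
  have B : ∀ s, R0 ≤ 2*s → 2*s+1 ≤ R1 → Y s (w-1) = Y' s (w-1) := by
    intro s h1 h2
    have hu : Y s (w-2) = Y' s (w-2) := A s (w-2) h1 h2 (by omega) (by omega)
    have l1 : S12b (Y s (w-2)) (Y s (w-1)) = true := by
      have := HL12 s (w-2) (by omega) (by omega)
      rwa [show w-2+1 = w-1 by omega] at this
    have l2 : S12b (Y' s (w-2)) (Y' s (w-1)) = true := by
      have := HL12' s (w-2) (by omega) (by omega)
      rwa [show w-2+1 = w-1 by omega] at this
    rw [hu] at l1
    apply ruleL _ _ _ l1 l2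
    have := HS (2*s+1) (2*(w-1)) (by omega) h2 (by omega) (by omega)
    rwa [WW10, WW10] at this
  intro r c hr1 hr2 hc1 hc2
  by_cases hc : c ≤ 2*w-2
  · exact HS r c hr1 hr2 hc1 hc
  have hce : c = 2*(w-1)+1 := by omega
  rcases Nat.even_or_odd r with he | ho
  · obtain ⟨s, hs⟩ := he
    have hr : r = 2*s := by omega
    by_cases hfull : 2*s+1 ≤ R1
    · rw [hr, hce, WW01, WW01, B s (by omega) hfull]
    · -- bottom partial: r = R1 = 2*h-2, s = h-1
      have hR1e : R1 = 2*h-2 := by omega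
      have hse : s = h-1 := by omega
      have hh3 : 3 ≤ h := hhq hR1e
      have hz : Y (h-2) (w-1) = Y' (h-2) (w-1) := B (h-2) (by omega) (by omega)
      have l1 : S21b (Y (h-2) (w-1)) (Y (h-1) (w-1)) = true := by
        have := HL21 (h-2) (w-1) (by omega) (by omega)
        rwa [show h-2+1 = h-1 by omega] at this
      have l2 : S21b (Y' (h-2) (w-1)) (Y' (h-1) (w-1)) = true := by
        have := HL21' (h-2) (w-1) (by omega) (by omega)
        rwa [show h-2+1 = h-1 by omega] at this
      rw [hz] at l1
      have h00 : mu (Y (h-1) (w-1)) 0 0 = mu (Y' (h-1) (w-1)) 0 0 := by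
        have := HS (2*(h-1)) (2*(w-1)) (by omega) (by omega) (by omega) (by omega)
        rwa [WW00, WW00] at this
      have := ruleD _ _ _ l1 l2 h00
      rw [hr, hse, hce, WW01, WW01]
      exact this
  · obtain ⟨s, hs⟩ := ho
    by_cases hfull : R0 ≤ 2*s
    · rw [hs, hce, WW11, WW11, B s hfull (by omega)]
    · -- top partial corner: s = 0, R0 = 1
      have hs0 : s = 0 := by omega
      have hR0e : R0 = 1 := by omega
      have hh3 : 3 ≤ h := hhp hR0e
      have hz2 : Y 1 (w-2) = Y' 1 (w-2) := A 1 (w-2) (by omega) (by omega) (by omega) (by omega)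
      have hu0 : Y 0 (w-2) = Y' 0 (w-2) := by
        have l1 : S21b (Y 0 (w-2)) (Y 1 (w-2)) = true := HL21 0 (w-2) (by omega) (by omega)
        have l2 : S21b (Y' 0 (w-2)) (Y' 1 (w-2)) = true := HL21' 0 (w-2) (by omega) (by omega)
        rw [← hz2] at l2
        apply ruleU _ _ _ l1 l2
        have := HS (2*0+1) (2*(w-2)) (by omega) (by omega) (by omega) (by omega)
        rwa [WW10, WW10] at this
      have hv : Y 0 (w-1) = Y' 0 (w-1) := by
        have l1 : S12b (Y 0 (w-2)) (Y 0 (w-1)) = true := by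
          have := HL12 0 (w-2) (by omega) (by omega)
          rwa [show w-2+1 = w-1 by omega] at this
        have l2 : S12b (Y' 0 (w-2)) (Y' 0 (w-1)) = true := by
          have := HL12' 0 (w-2) (by omega) (by omega)
          rwa [show w-2+1 = w-1 by omega] at this
        rw [hu0] at l1
        apply ruleL _ _ _ l1 l2
        have := HS (2*0+1) (2*(w-1)) (by omega) (by omega) (by omega) (by omega)
        rwa [WW10, WW10] at this
      rw [hs, hs0, hce, WW11, WW11, hv]

end Masters

section Masters2

variable {h w : ℕ} {Y Y' : ℕ → ℕ → A16}

/-- Master lemma: extra top row. -/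
lemma masterU (C0 C1 R1 : ℕ)
    (hw : 2 ≤ w) (hC0 : C0 ≤ 1)
    (hC1a : 2*w-2 ≤ C1) (hC1b : C1 ≤ 2*w-1)
    (hR1 : 3 ≤ R1) (hR1b : R1 ≤ 2*h-1)
    (hwp : C1 = 2*w-2 → 3 ≤ w) (hwq : C0 = 1 → 3 ≤ w)
    (HL12 : ∀ s t, s < h → t + 1 < w → S12b (Y s t) (Y s (t+1)) = true)
    (HL12' : ∀ s t, s < h → t + 1 < w → S12b (Y' s t) (Y' s (t+1)) = true)
    (HL21 : ∀ s t, s + 1 < h → t < w → S21b (Y s t) (Y (s+1) t) = true)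
    (HL21' : ∀ s t, s + 1 < h → t < w → S21b (Y' s t) (Y' (s+1) t) = true)
    (HS : ∀ r c, 1 ≤ r → r ≤ R1 → C0 ≤ c → c ≤ C1 → WW Y r c = WW Y' r c) :
    ∀ r c, r ≤ R1 → C0 ≤ c → c ≤ C1 → WW Y r c = WW Y' r c := by
  have A : ∀ s t, 1 ≤ s → 2*s+1 ≤ R1 → C0 ≤ 2*t → 2*t+1 ≤ C1 → Y s t = Y' s t := by
    intro s t h1 h2 h3 h4
    apply ruleME
    · have := HS (2*s) (2*t) (by omega) (by omega) h3 (by omega); rwa [WW00, WW00] at this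
    · have := HS (2*s) (2*t+1) (by omega) (by omega) (by omega) h4; rwa [WW01, WW01] at this
    · have := HS (2*s+1) (2*t) (by omega) h2 h3 (by omega); rwa [WW10, WW10] at this
    · have := HS (2*s+1) (2*t+1) (by omega) h2 (by omega) h4; rwa [WW11, WW11] at this
  have B : ∀ t, C0 ≤ 2*t → 2*t+1 ≤ C1 → Y 0 t = Y' 0 t := by
    intro t h3 h4
    have hz : Y 1 t = Y' 1 t := A 1 t (by omega) (by omega) h3 h4
    have l1 : S21b (Y 0 t) (Y 1 t) = true := HL21 0 t (by omega) (by omega)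
    have l2 : S21b (Y' 0 t) (Y' 1 t) = true := HL21' 0 t (by omega) (by omega)
    rw [← hz] at l2
    apply ruleU _ _ _ l1 l2
    have := HS (2*0+1) (2*t) (by omega) (by omega) h3 (by omega)
    rwa [WW10, WW10] at this
  intro r c hr hc1 hc2
  by_cases hr0 : 1 ≤ r
  · exact HS r c hr0 hr hc1 hc2
  have hre : r = 0 := by omega
  rcases Nat.even_or_odd c with he | ho
  · obtain ⟨t, ht⟩ := he
    have hct : c = 2*t := by omega
    by_cases hfull : 2*t+1 ≤ C1
    · rw [hre, hct, show (0:ℕ) = 2*0 by omega, WW00, WW00, B t (by omega) hfull]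
    · -- right corner : t = w-1, C1 = 2*w-2
      have hC1e : C1 = 2*w-2 := by omega
      have hte : t = w-1 := by omega
      have hw3 : 3 ≤ w := hwp hC1e
      have hu : Y 0 (w-2) = Y' 0 (w-2) := B (w-2) (by omega) (by omega)
      have hv : Y 0 (w-1) = Y' 0 (w-1) := by
        have l1 : S12b (Y 0 (w-2)) (Y 0 (w-1)) = true := by
          have := HL12 0 (w-2) (by omega) (by omega)
          rwa [show w-2+1 = w-1 by omega] at this
        have l2 : S12b (Y' 0 (w-2)) (Y' 0 (w-1)) = true := by
          have := HL12' 0 (w-2) (by omega) (by omega)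
          rwa [show w-2+1 = w-1 by omega] at this
        rw [hu] at l1
        apply ruleL _ _ _ l1 l2
        have := HS (2*0+1) (2*(w-1)) (by omega) (by omega) (by omega) (by omega)
        rwa [WW10, WW10] at this
      rw [hre, hct, hte, show (0:ℕ) = 2*0 by omega, WW00, WW00, hv]
  · obtain ⟨t, ht⟩ := ho
    by_cases hfull : C0 ≤ 2*t
    · rw [hre, ht, show (0:ℕ) = 2*0 by omega, WW01, WW01, B t hfull (by omega)]
    · -- left corner : t = 0, C0 = 1
      have ht0 : t = 0 := by omega
      have hC0e : C0 = 1 := by omega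
      have hw3 : 3 ≤ w := hwq hC0e
      have hu1 : Y 0 1 = Y' 0 1 := B 1 (by omega) (by omega)
      have l1 : S12b (Y 0 0) (Y 0 1) = true := HL12 0 0 (by omega) (by omega)
      have l2 : S12b (Y' 0 0) (Y' 0 1) = true := HL12' 0 0 (by omega) (by omega)
      rw [← hu1] at l2
      have h11 : mu (Y 0 0) 1 1 = mu (Y' 0 0) 1 1 := by
        have := HS (2*0+1) (2*0+1) (by omega) (by omega) (by omega) (by omega)
        rwa [WW11, WW11] at this
      have := ruleB _ _ _ l1 l2 h11
      rw [hre, ht, ht0, show (0:ℕ) = 2*0 by omega, WW01, WW01]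
      exact this

/-- Master lemma: extra top row and extra right column. -/
lemma masterB (C0 R1 : ℕ)
    (hh : 3 ≤ h) (hw : 3 ≤ w) (hC0 : C0 ≤ 1)
    (hR1a : 2*h-2 ≤ R1) (hR1b : R1 ≤ 2*h-1)
    (HL12 : ∀ s t, s < h → t + 1 < w → S12b (Y s t) (Y s (t+1)) = true)
    (HL12' : ∀ s t, s < h → t + 1 < w → S12b (Y' s t) (Y' s (t+1)) = true)
    (HL21 : ∀ s t, s + 1 < h → t < w → S21b (Y s t) (Y (s+1) t) = true)
    (HL21' : ∀ s t, s + 1 < h → t < w → S21b (Y' s t) (Y' (s+1) t) = true)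
    (HS : ∀ r c, 1 ≤ r → r ≤ R1 → C0 ≤ c → c ≤ 2*w-2 → WW Y r c = WW Y' r c) :
    ∀ r c, r ≤ R1 → C0 ≤ c → c ≤ 2*w-1 → WW Y r c = WW Y' r c := by
  have A : ∀ s t, 1 ≤ s → 2*s+1 ≤ R1 → C0 ≤ 2*t → 2*t+1 ≤ 2*w-2 → Y s t = Y' s t := by
    intro s t h1 h2 h3 h4
    apply ruleME
    · have := HS (2*s) (2*t) (by omega) (by omega) h3 (by omega); rwa [WW00, WW00] at this
    · have := HS (2*s) (2*t+1) (by omega) (by omega) (by omega) h4; rwa [WW01, WW01] at this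
    · have := HS (2*s+1) (2*t) (by omega) h2 h3 (by omega); rwa [WW10, WW10] at this
    · have := HS (2*s+1) (2*t+1) (by omega) h2 (by omega) h4; rwa [WW11, WW11] at this
  have Bcol : ∀ s, 1 ≤ s → 2*s+1 ≤ R1 → Y s (w-1) = Y' s (w-1) := by
    intro s h1 h2
    have hu : Y s (w-2) = Y' s (w-2) := A s (w-2) h1 h2 (by omega) (by omega)
    have l1 : S12b (Y s (w-2)) (Y s (w-1)) = true := by
      have := HL12 s (w-2) (by omega) (by omega)
      rwa [show w-2+1 = w-1 by omega] at this
    have l2 : S12b (Y' s (w-2)) (Y' s (w-1)) = true := by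
      have := HL12' s (w-2) (by omega) (by omega)
      rwa [show w-2+1 = w-1 by omega] at this
    rw [hu] at l1
    apply ruleL _ _ _ l1 l2
    have := HS (2*s+1) (2*(w-1)) (by omega) h2 (by omega) (by omega)
    rwa [WW10, WW10] at this
  have Brow : ∀ t, C0 ≤ 2*t → 2*t+1 ≤ 2*w-2 → Y 0 t = Y' 0 t := by
    intro t h3 h4
    have hz : Y 1 t = Y' 1 t := A 1 t (by omega) (by omega) h3 h4
    have l1 : S21b (Y 0 t) (Y 1 t) = true := HL21 0 t (by omega) (by omega)
    have l2 : S21b (Y' 0 t) (Y' 1 t) = true := HL21' 0 t (by omega) (by omega)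
    rw [← hz] at l2
    apply ruleU _ _ _ l1 l2
    have := HS (2*0+1) (2*t) (by omega) (by omega) h3 (by omega)
    rwa [WW10, WW10] at this
  have hcorner : Y 0 (w-1) = Y' 0 (w-1) := by
    have hu : Y 0 (w-2) = Y' 0 (w-2) := Brow (w-2) (by omega) (by omega)
    have l1 : S12b (Y 0 (w-2)) (Y 0 (w-1)) = true := by
      have := HL12 0 (w-2) (by omega) (by omega)
      rwa [show w-2+1 = w-1 by omega] at this
    have l2 : S12b (Y' 0 (w-2)) (Y' 0 (w-1)) = true := by
      have := HL12' 0 (w-2) (by omega) (by omega)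
      rwa [show w-2+1 = w-1 by omega] at this
    rw [hu] at l1
    apply ruleL _ _ _ l1 l2
    have := HS (2*0+1) (2*(w-1)) (by omega) (by omega) (by omega) (by omega)
    rwa [WW10, WW10] at this
  intro r c hr hc1 hc2
  by_cases hcs : c ≤ 2*w-2
  · -- extra top row (or interior)
    by_cases hr0 : 1 ≤ r
    · exact HS r c hr0 hr hc1 hcs
    have hre : r = 0 := by omega
    rcases Nat.even_or_odd c with he | ho
    · obtain ⟨t, ht⟩ := he
      have hct : c = 2*t := by omega
      by_cases hfull : 2*t+1 ≤ 2*w-2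
      · rw [hre, hct, show (0:ℕ) = 2*0 by omega, WW00, WW00, Brow t (by omega) hfull]
      · have hte : t = w-1 := by omega
        rw [hre, hct, hte, show (0:ℕ) = 2*0 by omega, WW00, WW00, hcorner]
    · obtain ⟨t, ht⟩ := ho
      by_cases hfull : C0 ≤ 2*t
      · rw [hre, ht, show (0:ℕ) = 2*0 by omega, WW01, WW01, Brow t hfull (by omega)]
      · have ht0 : t = 0 := by omega
        have hC0e : C0 = 1 := by omega
        have hu1 : Y 0 1 = Y' 0 1 := Brow 1 (by omega) (by omega)
        have l1 : S12b (Y 0 0) (Y 0 1) = true := HL12 0 0 (by omega) (by omega)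
        have l2 : S12b (Y' 0 0) (Y' 0 1) = true := HL12' 0 0 (by omega) (by omega)
        rw [← hu1] at l2
        have h11 : mu (Y 0 0) 1 1 = mu (Y' 0 0) 1 1 := by
          have := HS (2*0+1) (2*0+1) (by omega) (by omega) (by omega) (by omega)
          rwa [WW11, WW11] at this
        have := ruleB _ _ _ l1 l2 h11
        rw [hre, ht, ht0, show (0:ℕ) = 2*0 by omega, WW01, WW01]
        exact this
  · -- extra right column
    have hce : c = 2*(w-1)+1 := by omega
    rcases Nat.even_or_odd r with he | ho
    · obtain ⟨s, hs⟩ := he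
      have hrs : r = 2*s := by omega
      by_cases hfull : 2*s+1 ≤ R1
      · by_cases hs1 : 1 ≤ s
        · rw [hrs, hce, WW01, WW01, Bcol s hs1 hfull]
        · have : s = 0 := by omega
          rw [hrs, this, hce, WW01, WW01, hcorner]
      · -- bottom partial: s = h-1, R1 = 2h-2
        have hse : s = h-1 := by omega
        have hz : Y (h-2) (w-1) = Y' (h-2) (w-1) := Bcol (h-2) (by omega) (by omega)
        have l1 : S21b (Y (h-2) (w-1)) (Y (h-1) (w-1)) = true := by
          have := HL21 (h-2) (w-1) (by omega) (by omega)
          rwa [show h-2+1 = h-1 by omega] at this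
        have l2 : S21b (Y' (h-2) (w-1)) (Y' (h-1) (w-1)) = true := by
          have := HL21' (h-2) (w-1) (by omega) (by omega)
          rwa [show h-2+1 = h-1 by omega] at this
        rw [hz] at l1
        have h00 : mu (Y (h-1) (w-1)) 0 0 = mu (Y' (h-1) (w-1)) 0 0 := by
          have := HS (2*(h-1)) (2*(w-1)) (by omega) (by omega) (by omega) (by omega)
          rwa [WW00, WW00] at this
        have := ruleD _ _ _ l1 l2 h00
        rw [hrs, hse, hce, WW01, WW01]
        exact this
    · obtain ⟨s, hs⟩ := ho
      by_cases hs1 : 1 ≤ s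
      · rw [hs, hce, WW11, WW11, Bcol s hs1 (by omega)]
      · have hs0 : s = 0 := by omega
        rw [hs, hs0, hce, WW11, WW11, hcorner]

end Masters2

-- ===== specialized image descriptions =====
lemma Pij11 (m n : ℕ) (hm : 2 ≤ m) (hn : 2 ≤ n) :
    Pij 1 1 m n = Fmap 0 0 m n (h := (m+1)/2) (w := (n+1)/2) '' PT ((m+1)/2) ((n+1)/2) := by
  simpa using Pij_eq_image 0 0 m n (by omega) (by omega) hm hn

lemma Pij12 (m n : ℕ) (hm : 2 ≤ m) (hn : 2 ≤ n) :
    Pij 1 2 m n = Fmap 0 1 m n (h := (m+1)/2) (w := (n+2)/2) '' PT ((m+1)/2) ((n+2)/2) := by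
  have := Pij_eq_image 0 1 m n (by omega) (by omega) hm hn
  rwa [show m+0+1 = m+1 by omega, show n+1+1 = n+2 by omega, show (0:ℕ)+1 = 1 by omega,
    show (1:ℕ)+1 = 2 by omega] at this

lemma Pij21 (m n : ℕ) (hm : 2 ≤ m) (hn : 2 ≤ n) :
    Pij 2 1 m n = Fmap 1 0 m n (h := (m+2)/2) (w := (n+1)/2) '' PT ((m+2)/2) ((n+1)/2) := by
  have := Pij_eq_image 1 0 m n (by omega) (by omega) hm hn
  rwa [show m+1+1 = m+2 by omega, show n+0+1 = n+1 by omega, show (0:ℕ)+1 = 1 by omega,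
    show (1:ℕ)+1 = 2 by omega] at this

lemma Pij22 (m n : ℕ) (hm : 2 ≤ m) (hn : 2 ≤ n) :
    Pij 2 2 m n = Fmap 1 1 m n (h := (m+2)/2) (w := (n+2)/2) '' PT ((m+2)/2) ((n+2)/2) := by
  have := Pij_eq_image 1 1 m n (by omega) (by omega) hm hn
  rwa [show m+1+1 = m+2 by omega, show n+1+1 = n+2 by omega, show (1:ℕ)+1 = 2 by omega] at this

lemma Fmap_eq_iff {h w : ℕ} (di dj m n : ℕ) (y y' : Pat A16 h w) :
    Fmap di dj m n y = Fmap di dj m n y' ↔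
    (∀ r c : ℕ, di ≤ r → r < di + m → dj ≤ c → c < dj + n →
      WW (yF y) r c = WW (yF y') r c) := by
  constructor
  · intro H r c h1 h2 h3 h4
    have := congrFun (congrFun H ⟨r - di, by omega⟩) ⟨c - dj, by omega⟩
    simp only [Fmap] at this
    rwa [show di + (⟨r - di, by omega⟩ : Fin m).1 = r by simp; omega,
      show dj + (⟨c - dj, by omega⟩ : Fin n).1 = c by simp; omega] at this
  · intro H
    funext a b
    simp only [Fmap]
    exact H (di + a.1) (dj + b.1) (by omega) (by have := a.2; omega)
      (by omega) (by have := b.2; omega)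

-- ===== instance E1 : aT 1 2 m = bT 1 2 m for even m ≥ 4 =====
lemma instE1 (m : ℕ) (hm : 4 ≤ m) (he : m % 2 = 0) : aT 1 2 m = bT 1 2 m := by
  have h1 := Pij12 m m (by omega) (by omega)
  have h2 := Pij12 m (m+1) (by omega) (by omega)
  rw [show (m+1+2)/2 = (m+2)/2 by omega] at h2
  show Nat.card (Pij 1 2 m m) = Nat.card (Pij 1 2 m (m+1))
  rw [h1, h2]
  apply card_img
  intro y hy y' hy'
  rw [Fmap_eq_iff 0 1 m m y y', Fmap_eq_iff 0 1 m (m+1) y y']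
  constructor
  · intro HS r c b1 b2 b3 b4
    refine masterR (h := (m+1)/2) (w := (m+2)/2) (Y := yF y) (Y' := yF y') 0 (m-1) 1
      (by omega) (by omega) (by omega) (by omega) (by omega) (by omega)
      (by intro hq; omega) (by intro hq; omega)
      (fun s t hs ht => lang12 hy hs ht) (fun s t hs ht => lang12 hy' hs ht)
      (fun s t hs ht => lang21 hy hs ht) (fun s t hs ht => lang21 hy' hs ht)
      (fun r c a1 a2 a3 a4 => HS r c (by omega) (by omega) (by omega) (by omega))
      r c (by omega) (by omega) (by omega) (by omega)
  · intro HB r c b1 b2 b3 b4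
    exact HB r c (by omega) (by omega) (by omega) (by omega)

lemma instE2 (m : ℕ) (hm : 4 ≤ m) : aT 2 1 m = cT 1 1 m := by
  have h1 := Pij21 m m (by omega) (by omega)
  have h2 := Pij11 (m+1) m (by omega) (by omega)
  rw [show (m+1+1)/2 = (m+2)/2 by omega] at h2
  show Nat.card (Pij 2 1 m m) = Nat.card (Pij 1 1 (m+1) m)
  rw [h1, h2]
  apply card_img
  intro y hy y' hy'
  rw [Fmap_eq_iff 1 0 m m y y', Fmap_eq_iff 0 0 (m+1) m y y']
  constructor
  · intro HS r c b1 b2 b3 b4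
    refine masterU (h := (m+2)/2) (w := (m+1)/2) (Y := yF y) (Y' := yF y') 0 (m-1) m
      (by omega) (by omega) (by omega) (by omega) (by omega) (by omega)
      (by intro hq; omega) (by intro hq; omega)
      (fun s t hs ht => lang12 hy hs ht) (fun s t hs ht => lang12 hy' hs ht)
      (fun s t hs ht => lang21 hy hs ht) (fun s t hs ht => lang21 hy' hs ht)
      (fun r c a1 a2 a3 a4 => HS r c (by omega) (by omega) (by omega) (by omega))
      r c (by omega) (by omega) (by omega)
  · intro HB r c b1 b2 b3 b4
    exact HB r c (by omega) (by omega) (by omega) (by omega)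

lemma instE3 (m : ℕ) (hm : 4 ≤ m) (he : m % 2 = 0) : aT 2 2 m = aT 1 2 (m+1) := by
  have h1 := Pij22 m m (by omega) (by omega)
  have h2 := Pij12 (m+1) (m+1) (by omega) (by omega)
  rw [show (m+1+1)/2 = (m+2)/2 by omega, show (m+1+2)/2 = (m+2)/2 by omega] at h2
  show Nat.card (Pij 2 2 m m) = Nat.card (Pij 1 2 (m+1) (m+1))
  rw [h1, h2]
  apply card_img
  intro y hy y' hy'
  rw [Fmap_eq_iff 1 1 m m y y', Fmap_eq_iff 0 1 (m+1) (m+1) y y']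
  constructor
  · intro HS r c b1 b2 b3 b4
    refine masterB (h := (m+2)/2) (w := (m+2)/2) (Y := yF y) (Y' := yF y') 1 m
      (by omega) (by omega) (by omega) (by omega) (by omega)
      (fun s t hs ht => lang12 hy hs ht) (fun s t hs ht => lang12 hy' hs ht)
      (fun s t hs ht => lang21 hy hs ht) (fun s t hs ht => lang21 hy' hs ht)
      (fun r c a1 a2 a3 a4 => HS r c (by omega) (by omega) (by omega) (by omega))
      r c (by omega) (by omega) (by omega)
  · intro HB r c b1 b2 b3 b4
    exact HB r c (by omega) (by omega) (by omega) (by omega)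

lemma instE4 (m : ℕ) (hm : 4 ≤ m) : aT 2 2 m = cT 1 2 m := by
  have h1 := Pij22 m m (by omega) (by omega)
  have h2 := Pij12 (m+1) m (by omega) (by omega)
  rw [show (m+1+1)/2 = (m+2)/2 by omega] at h2
  show Nat.card (Pij 2 2 m m) = Nat.card (Pij 1 2 (m+1) m)
  rw [h1, h2]
  apply card_img
  intro y hy y' hy'
  rw [Fmap_eq_iff 1 1 m m y y', Fmap_eq_iff 0 1 (m+1) m y y']
  constructor
  · intro HS r c b1 b2 b3 b4
    refine masterU (h := (m+2)/2) (w := (m+2)/2) (Y := yF y) (Y' := yF y') 1 m m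
      (by omega) (by omega) (by omega) (by omega) (by omega) (by omega)
      (by intro hq; omega) (by intro hq; omega)
      (fun s t hs ht => lang12 hy hs ht) (fun s t hs ht => lang12 hy' hs ht)
      (fun s t hs ht => lang21 hy hs ht) (fun s t hs ht => lang21 hy' hs ht)
      (fun r c a1 a2 a3 a4 => HS r c (by omega) (by omega) (by omega) (by omega))
      r c (by omega) (by omega) (by omega)
  · intro HB r c b1 b2 b3 b4
    exact HB r c (by omega) (by omega) (by omega) (by omega)

lemma instE5 (m : ℕ) (hm : 4 ≤ m) (he : m % 2 = 0) : aT 2 2 m = bT 2 2 m := by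
  have h1 := Pij22 m m (by omega) (by omega)
  have h2 := Pij22 m (m+1) (by omega) (by omega)
  rw [show (m+1+2)/2 = (m+2)/2 by omega] at h2
  show Nat.card (Pij 2 2 m m) = Nat.card (Pij 2 2 m (m+1))
  rw [h1, h2]
  apply card_img
  intro y hy y' hy'
  rw [Fmap_eq_iff 1 1 m m y y', Fmap_eq_iff 1 1 m (m+1) y y']
  constructor
  · intro HS r c b1 b2 b3 b4
    refine masterR (h := (m+2)/2) (w := (m+2)/2) (Y := yF y) (Y' := yF y') 1 m 1
      (by omega) (by omega) (by omega) (by omega) (by omega) (by omega)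
      (by intro hq; omega) (by intro hq; omega)
      (fun s t hs ht => lang12 hy hs ht) (fun s t hs ht => lang12 hy' hs ht)
      (fun s t hs ht => lang21 hy hs ht) (fun s t hs ht => lang21 hy' hs ht)
      (fun r c a1 a2 a3 a4 => HS r c (by omega) (by omega) (by omega) (by omega))
      r c (by omega) (by omega) (by omega) (by omega)
  · intro HB r c b1 b2 b3 b4
    exact HB r c (by omega) (by omega) (by omega) (by omega)

lemma instE6 (m : ℕ) (hm : 5 ≤ m) (ho : m % 2 = 1) : aT 1 1 m = bT 1 1 m := by
  have h1 := Pij11 m m (by omega) (by omega)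
  have h2 := Pij11 m (m+1) (by omega) (by omega)
  rw [show (m+1+1)/2 = (m+1)/2 by omega] at h2
  show Nat.card (Pij 1 1 m m) = Nat.card (Pij 1 1 m (m+1))
  rw [h1, h2]
  apply card_img
  intro y hy y' hy'
  rw [Fmap_eq_iff 0 0 m m y y', Fmap_eq_iff 0 0 m (m+1) y y']
  constructor
  · intro HS r c b1 b2 b3 b4
    refine masterR (h := (m+1)/2) (w := (m+1)/2) (Y := yF y) (Y' := yF y') 0 (m-1) 0
      (by omega) (by omega) (by omega) (by omega) (by omega) (by omega)
      (by intro hq; omega) (by intro hq; omega)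
      (fun s t hs ht => lang12 hy hs ht) (fun s t hs ht => lang12 hy' hs ht)
      (fun s t hs ht => lang21 hy hs ht) (fun s t hs ht => lang21 hy' hs ht)
      (fun r c a1 a2 a3 a4 => HS r c (by omega) (by omega) (by omega) (by omega))
      r c (by omega) (by omega) (by omega) (by omega)
  · intro HB r c b1 b2 b3 b4
    exact HB r c (by omega) (by omega) (by omega) (by omega)

lemma instE7 (m : ℕ) (hm : 4 ≤ m) (he : m % 2 = 0) : aT 1 1 (m+1) = bT 2 1 m := by
  have h1 := Pij11 (m+1) (m+1) (by omega) (by omega)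
  have h2 := Pij21 m (m+1) (by omega) (by omega)
  rw [show (m+1+1)/2 = (m+2)/2 by omega] at h1
  rw [show (m+1+1)/2 = (m+2)/2 by omega] at h2
  show Nat.card (Pij 1 1 (m+1) (m+1)) = Nat.card (Pij 2 1 m (m+1))
  rw [h1, h2]
  apply card_img
  intro y hy y' hy'
  rw [Fmap_eq_iff 0 0 (m+1) (m+1) y y', Fmap_eq_iff 1 0 m (m+1) y y']
  constructor
  · intro HB r c b1 b2 b3 b4
    exact HB r c (by omega) (by omega) (by omega) (by omega)
  · intro HS r c b1 b2 b3 b4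
    refine masterU (h := (m+2)/2) (w := (m+2)/2) (Y := yF y) (Y' := yF y') 0 m m
      (by omega) (by omega) (by omega) (by omega) (by omega) (by omega)
      (by intro hq; omega) (by intro hq; omega)
      (fun s t hs ht => lang12 hy hs ht) (fun s t hs ht => lang12 hy' hs ht)
      (fun s t hs ht => lang21 hy hs ht) (fun s t hs ht => lang21 hy' hs ht)
      (fun r c a1 a2 a3 a4 => HS r c (by omega) (by omega) (by omega) (by omega))
      r c (by omega) (by omega) (by omega)

lemma instE8 (m : ℕ) (hm : 5 ≤ m) (ho : m % 2 = 1) : aT 2 1 m = aT 1 1 (m+1) := by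
  have h1 := Pij21 m m (by omega) (by omega)
  have h2 := Pij11 (m+1) (m+1) (by omega) (by omega)
  rw [show (m+1)/2 = (m+1+1)/2 by omega, show (m+2)/2 = (m+1+1)/2 by omega] at h1
  show Nat.card (Pij 2 1 m m) = Nat.card (Pij 1 1 (m+1) (m+1))
  rw [h1, h2]
  apply card_img
  intro y hy y' hy'
  rw [Fmap_eq_iff 1 0 m m y y', Fmap_eq_iff 0 0 (m+1) (m+1) y y']
  constructor
  · intro HS r c b1 b2 b3 b4
    refine masterB (h := (m+1+1)/2) (w := (m+1+1)/2) (Y := yF y) (Y' := yF y') 0 m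
      (by omega) (by omega) (by omega) (by omega) (by omega)
      (fun s t hs ht => lang12 hy hs ht) (fun s t hs ht => lang12 hy' hs ht)
      (fun s t hs ht => lang21 hy hs ht) (fun s t hs ht => lang21 hy' hs ht)
      (fun r c a1 a2 a3 a4 => HS r c (by omega) (by omega) (by omega) (by omega))
      r c (by omega) (by omega) (by omega)
  · intro HB r c b1 b2 b3 b4
    exact HB r c (by omega) (by omega) (by omega) (by omega)

lemma instE9 (m : ℕ) (hm : 5 ≤ m) (ho : m % 2 = 1) : aT 2 1 m = bT 2 1 m := by
  have h1 := Pij21 m m (by omega) (by omega)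
  have h2 := Pij21 m (m+1) (by omega) (by omega)
  rw [show (m+1)/2 = (m+2)/2 by omega] at h1
  show Nat.card (Pij 2 1 m m) = Nat.card (Pij 2 1 m (m+1))
  rw [h1, h2]
  apply card_img
  intro y hy y' hy'
  rw [Fmap_eq_iff 1 0 m m y y', Fmap_eq_iff 1 0 m (m+1) y y']
  constructor
  · intro HS r c b1 b2 b3 b4
    refine masterR (h := (m+2)/2) (w := (m+2)/2) (Y := yF y) (Y' := yF y') 1 m 0
      (by omega) (by omega) (by omega) (by omega) (by omega) (by omega)
      (by intro hq; omega) (by intro hq; omega)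
      (fun s t hs ht => lang12 hy hs ht) (fun s t hs ht => lang12 hy' hs ht)
      (fun s t hs ht => lang21 hy hs ht) (fun s t hs ht => lang21 hy' hs ht)
      (fun r c a1 a2 a3 a4 => HS r c (by omega) (by omega) (by omega) (by omega))
      r c (by omega) (by omega) (by omega) (by omega)
  · intro HB r c b1 b2 b3 b4
    exact HB r c (by omega) (by omega) (by omega) (by omega)

lemma instE10 (m : ℕ) (hm : 4 ≤ m) (he : m % 2 = 0) : aT 2 2 (m+1) = cT 2 2 m := by
  have h1 := Pij22 (m+1) (m+1) (by omega) (by omega)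
  have h2 := Pij22 (m+1) m (by omega) (by omega)
  rw [show (m+2)/2 = (m+1+2)/2 by omega] at h2
  show Nat.card (Pij 2 2 (m+1) (m+1)) = Nat.card (Pij 2 2 (m+1) m)
  rw [h1, h2]
  apply card_img
  intro y hy y' hy'
  rw [Fmap_eq_iff 1 1 (m+1) (m+1) y y', Fmap_eq_iff 1 1 (m+1) m y y']
  constructor
  · intro HB r c b1 b2 b3 b4
    exact HB r c (by omega) (by omega) (by omega) (by omega)
  · intro HS r c b1 b2 b3 b4
    refine masterR (h := (m+1+2)/2) (w := (m+1+2)/2) (Y := yF y) (Y' := yF y') 1 (m+1) 1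
      (by omega) (by omega) (by omega) (by omega) (by omega) (by omega)
      (by intro hq; omega) (by intro hq; omega)
      (fun s t hs ht => lang12 hy hs ht) (fun s t hs ht => lang12 hy' hs ht)
      (fun s t hs ht => lang21 hy hs ht) (fun s t hs ht => lang21 hy' hs ht)
      (fun r c a1 a2 a3 a4 => HS r c (by omega) (by omega) (by omega) (by omega))
      r c (by omega) (by omega) (by omega) (by omega)

lemma instE11 (m : ℕ) (hm : 5 ≤ m) (ho : m % 2 = 1) : aT 1 2 (m+1) = bT 2 2 m := by
  have h1 := Pij12 (m+1) (m+1) (by omega) (by omega)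
  have h2 := Pij22 m (m+1) (by omega) (by omega)
  rw [show (m+2)/2 = (m+1+1)/2 by omega] at h2
  show Nat.card (Pij 1 2 (m+1) (m+1)) = Nat.card (Pij 2 2 m (m+1))
  rw [h1, h2]
  apply card_img
  intro y hy y' hy'
  rw [Fmap_eq_iff 0 1 (m+1) (m+1) y y', Fmap_eq_iff 1 1 m (m+1) y y']
  constructor
  · intro HB r c b1 b2 b3 b4
    exact HB r c (by omega) (by omega) (by omega) (by omega)
  · intro HS r c b1 b2 b3 b4
    refine masterU (h := (m+1+1)/2) (w := (m+1+2)/2) (Y := yF y) (Y' := yF y') 1 (m+1) m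
      (by omega) (by omega) (by omega) (by omega) (by omega) (by omega)
      (by intro hq; omega) (by intro hq; omega)
      (fun s t hs ht => lang12 hy hs ht) (fun s t hs ht => lang12 hy' hs ht)
      (fun s t hs ht => lang21 hy hs ht) (fun s t hs ht => lang21 hy' hs ht)
      (fun r c a1 a2 a3 a4 => HS r c (by omega) (by omega) (by omega) (by omega))
      r c (by omega) (by omega) (by omega)

lemma instE12 (m : ℕ) (hm : 5 ≤ m) (ho : m % 2 = 1) : aT 2 1 (m+1) = cT 2 1 m := by
  have h1 := Pij21 (m+1) (m+1) (by omega) (by omega)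
  have h2 := Pij21 (m+1) m (by omega) (by omega)
  rw [show (m+1)/2 = (m+1+1)/2 by omega] at h2
  show Nat.card (Pij 2 1 (m+1) (m+1)) = Nat.card (Pij 2 1 (m+1) m)
  rw [h1, h2]
  apply card_img
  intro y hy y' hy'
  rw [Fmap_eq_iff 1 0 (m+1) (m+1) y y', Fmap_eq_iff 1 0 (m+1) m y y']
  constructor
  · intro HB r c b1 b2 b3 b4
    exact HB r c (by omega) (by omega) (by omega) (by omega)
  · intro HS r c b1 b2 b3 b4
    refine masterR (h := (m+1+2)/2) (w := (m+1+1)/2) (Y := yF y) (Y' := yF y') 1 (m+1) 0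
      (by omega) (by omega) (by omega) (by omega) (by omega) (by omega)
      (by intro hq; omega) (by intro hq; omega)
      (fun s t hs ht => lang12 hy hs ht) (fun s t hs ht => lang12 hy' hs ht)
      (fun s t hs ht => lang21 hy hs ht) (fun s t hs ht => lang21 hy' hs ht)
      (fun r c a1 a2 a3 a4 => HS r c (by omega) (by omega) (by omega) (by omega))
      r c (by omega) (by omega) (by omega) (by omega)

/-- Corollary 4.3: the equalities among a, b, c with arguments mod 4. -/
theorem abc_equalities_mod_four (n : ℕ) (hn : 1 ≤ n) :
    (aT 1 2 (4 * n) = bT 1 2 (4 * n)) ∧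
    (aT 2 1 (4 * n) = cT 1 1 (4 * n)) ∧
    (aT 2 2 (4 * n) = aT 1 2 (4 * n + 1) ∧ aT 2 2 (4 * n) = cT 1 2 (4 * n) ∧
      aT 2 2 (4 * n) = bT 2 2 (4 * n)) ∧
    (aT 1 1 (4 * n + 1) = bT 1 1 (4 * n + 1) ∧
      aT 1 1 (4 * n + 1) = bT 2 1 (4 * n)) ∧
    (aT 2 1 (4 * n + 1) = aT 1 1 (4 * n + 2) ∧
      aT 2 1 (4 * n + 1) = cT 1 1 (4 * n + 1) ∧
      aT 2 1 (4 * n + 1) = bT 2 1 (4 * n + 1)) ∧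
    (aT 2 2 (4 * n + 1) = cT 1 2 (4 * n + 1) ∧
      aT 2 2 (4 * n + 1) = cT 2 2 (4 * n)) ∧
    (aT 1 2 (4 * n + 2) = bT 1 2 (4 * n + 2) ∧
      aT 1 2 (4 * n + 2) = bT 2 2 (4 * n + 1)) ∧
    (aT 2 1 (4 * n + 2) = cT 1 1 (4 * n + 2) ∧
      aT 2 1 (4 * n + 2) = cT 2 1 (4 * n + 1)) ∧
    (aT 2 2 (4 * n + 2) = aT 1 2 (4 * n + 3) ∧
      aT 2 2 (4 * n + 2) = cT 1 2 (4 * n + 2) ∧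
      aT 2 2 (4 * n + 2) = bT 2 2 (4 * n + 2)) ∧
    (aT 1 1 (4 * n + 3) = bT 1 1 (4 * n + 3) ∧
      aT 1 1 (4 * n + 3) = bT 2 1 (4 * n + 2)) ∧
    (aT 2 1 (4 * n + 3) = cT 1 1 (4 * n + 3) ∧
      aT 2 1 (4 * n + 3) = bT 2 1 (4 * n + 3)) ∧
    (aT 2 2 (4 * n + 3) = cT 1 2 (4 * n + 3) ∧
      aT 2 2 (4 * n + 3) = cT 2 2 (4 * n + 2)) := by
  refine ⟨instE1 (4*n) (by omega) (by omega),
    instE2 (4*n) (by omega),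
    ⟨instE3 (4*n) (by omega) (by omega), instE4 (4*n) (by omega),
      instE5 (4*n) (by omega) (by omega)⟩,
    ⟨instE6 (4*n+1) (by omega) (by omega), instE7 (4*n) (by omega) (by omega)⟩,
    ⟨instE8 (4*n+1) (by omega) (by omega), instE2 (4*n+1) (by omega),
      instE9 (4*n+1) (by omega) (by omega)⟩,
    ⟨instE4 (4*n+1) (by omega), instE10 (4*n) (by omega) (by omega)⟩,
    ⟨instE1 (4*n+2) (by omega) (by omega), instE11 (4*n+1) (by omega) (by omega)⟩,
    ⟨instE2 (4*n+2) (by omega), instE12 (4*n+1) (by omega) (by omega)⟩,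
    ⟨instE3 (4*n+2) (by omega) (by omega), instE4 (4*n+2) (by omega),
      instE5 (4*n+2) (by omega) (by omega)⟩,
    ⟨instE6 (4*n+3) (by omega) (by omega), instE7 (4*n+2) (by omega) (by omega)⟩,
    ⟨instE2 (4*n+3) (by omega), instE9 (4*n+3) (by omega) (by omega)⟩,
    ⟨instE4 (4*n+3) (by omega), instE10 (4*n+2) (by omega) (by omega)⟩⟩
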